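/- Let K₁ ⊆ ℂ^{n₁×n₁} and K₂ ⊆ ℂ^{n₂×n₂} be subspaces of matrices, x⁽¹⁾ ∈ K₁ and x⁽²⁾ ∈ K₂ critical points of the entanglement entropy E (i.e., Tr(x⁽ⁱ⁾ y* · log(x⁽ⁱ⁾x⁽ⁱ⁾*)) = 0 for all y ∈ Kᵢ with Tr(x⁽ⁱ⁾y*) = 0, assuming x⁽ⁱ⁾x⁽ⁱ⁾* positive definite). Then x⁽¹⁾ ⊗ x⁽²⁾ is a critical point of E in K₁ ⊗ K₂: Tr((x⁽¹⁾⊗x⁽²⁾)y* · log((x⁽¹⁾x⁽¹⁾*)⊗(x⁽²⁾x⁽²⁾*))) = 0 for all y ∈ K₁⊗K₂ with Tr((x⁽¹⁾⊗x⁽²⁾)y*) = 0. -/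

import Mathlib

open Matrix Kronecker
open scoped ComplexOrder

variable {n : Type*} [Fintype n] [DecidableEq n]

/-- Matrix logarithm of a Hermitian matrix via its spectral decomposition. -/
noncomputable def matLog (A : Matrix n n ℂ) : Matrix n n ℂ :=
  if hA : A.IsHermitian then
    (hA.eigenvectorUnitary : Matrix n n ℂ) *
      Matrix.diagonal (fun i => (Real.log (hA.eigenvalues i) : ℂ)) *
        (hA.eigenvectorUnitary : Matrix n n ℂ)ᴴ
  else 0

/-- `x` is a critical point of the entanglement entropy in the subspace `K`:
`Tr(x y* log(xx*)) = 0` for every `y ∈ K` Hilbert–Schmidt-orthogonal to `x`. -/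
def IsCriticalIn (K : Submodule ℂ (Matrix n n ℂ)) (x : Matrix n n ℂ) : Prop :=
  ∀ y ∈ K, Matrix.trace (x * yᴴ) = 0 →
    Matrix.trace (x * yᴴ * matLog (x * xᴴ)) = 0

/-- The tensor (Kronecker) product of two subspaces of matrices. -/
noncomputable def tensorSubspace {n₁ n₂ : ℕ} (K₁ : Submodule ℂ (Matrix (Fin n₁) (Fin n₁) ℂ))
    (K₂ : Submodule ℂ (Matrix (Fin n₂) (Fin n₂) ℂ)) :
    Submodule ℂ (Matrix (Fin n₁ × Fin n₂) (Fin n₁ × Fin n₂) ℂ) :=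
  Submodule.span ℂ {z | ∃ a ∈ K₁, ∃ b ∈ K₂, z = a ⊗ₖ b}

/- ### Auxiliary lemmas -/

section Aux

open Polynomial

variable {m : Type*} [Fintype m] [DecidableEq m]

omit [Fintype n] [DecidableEq n] [Fintype m] [DecidableEq m] in
lemma kron_conjTranspose {l p : Type*} (A : Matrix n l ℂ) (B : Matrix m p ℂ) :
    (A ⊗ₖ B)ᴴ = Aᴴ ⊗ₖ Bᴴ := by
  ext ⟨i, j⟩ ⟨k, l⟩
  simp [conjTranspose_apply, kroneckerMap_apply]

/-- Conjugation by a unitary as an algebra homomorphism. -/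
noncomputable def conjAlgHom (W : Matrix n n ℂ) (Wi : Matrix n n ℂ)
    (h : W * Wi = 1) (h' : Wi * W = 1) : Matrix n n ℂ →ₐ[ℂ] Matrix n n ℂ where
  toFun N := W * N * Wi
  map_one' := by show W * 1 * Wi = 1; rw [Matrix.mul_one, h]
  map_mul' a b := by
    show W * (a * b) * Wi = W * a * Wi * (W * b * Wi)
    calc W * (a * b) * Wi = W * a * (Wi * W) * b * Wi := by
          rw [h']; noncomm_ring
      _ = W * a * Wi * (W * b * Wi) := by noncomm_ring
  map_zero' := by show W * 0 * Wi = 0; simp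
  map_add' a b := by show W * (a + b) * Wi = W * a * Wi + W * b * Wi; noncomm_ring
  commutes' r := by
    show W * algebraMap ℂ (Matrix n n ℂ) r * Wi = algebraMap ℂ (Matrix n n ℂ) r
    rw [Algebra.algebraMap_eq_smul_one, Matrix.mul_smul, Matrix.mul_one,
      Matrix.smul_mul, h]

lemma aeval_conj (W Wi N : Matrix n n ℂ) (h : W * Wi = 1) (h' : Wi * W = 1) (p : ℂ[X]) :
    aeval (W * N * Wi) p = W * aeval N p * Wi := by
  have := Polynomial.aeval_algHom_apply (conjAlgHom W Wi h h') N p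
  simpa [conjAlgHom] using this

lemma aeval_diagonal (d : n → ℂ) (p : ℂ[X]) :
    aeval (Matrix.diagonal d) p = Matrix.diagonal (fun i => eval (d i) p) := by
  have h1 := Polynomial.aeval_algHom_apply
    (Matrix.diagonalAlgHom (R := ℂ) (n := n) (α := ℂ)) d p
  simp only [Matrix.diagonalAlgHom_apply] at h1
  rw [h1]
  exact congrArg Matrix.diagonal (funext fun i => by
    have h2 := Polynomial.aeval_algHom_apply (Pi.evalAlgHom ℂ (fun _ : n => ℂ) i) d p
    simp only [Pi.evalAlgHom_apply] at h2
    rw [← h2]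
    exact congrFun (Polynomial.coe_aeval_eq_eval (d i)) p)

/-- If a polynomial interpolates `Real.log` on the (canonical) eigenvalues of a Hermitian
matrix, then applying it to the matrix yields `matLog`. -/
lemma aeval_eq_matLog {A : Matrix n n ℂ} (hA : A.IsHermitian) (p : ℂ[X])
    (hp : ∀ i, eval ((hA.eigenvalues i : ℝ) : ℂ) p = ((Real.log (hA.eigenvalues i) : ℝ) : ℂ)) :
    aeval A p = matLog A := by
  rw [matLog, dif_pos hA]
  set U : Matrix n n ℂ := (hA.eigenvectorUnitary : Matrix n n ℂ) with hU
  have h1 : U * star U = 1 := (Matrix.mem_unitaryGroup_iff).mp hA.eigenvectorUnitary.2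
  have h2 : star U * U = 1 := (Matrix.mem_unitaryGroup_iff').mp hA.eigenvectorUnitary.2
  conv_lhs => rw [hA.spectral_theorem, Unitary.conjStarAlgAut_apply]
  rw [aeval_conj _ _ _ h1 h2, aeval_diagonal]
  rw [Matrix.star_eq_conjTranspose]
  have hfun : (fun i => Polynomial.eval ((RCLike.ofReal ∘ hA.eigenvalues) i) p)
      = fun i => ((Real.log (hA.eigenvalues i) : ℝ) : ℂ) := funext fun i => hp i
  rw [hfun]

lemma trace_pos_of_posDef {M : Matrix n n ℂ} (hM : M.PosDef) [Nonempty n] :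
    M.trace ≠ 0 := by
  have hdiag : ∀ i, 0 < M i i := by
    intro i
    have := hM.dotProduct_mulVec_pos (x := Pi.single i 1) (by
      intro h
      have := congrFun h i
      simp at this)
    simpa [dotProduct, Pi.single_apply, mulVec] using this
  exact ne_of_gt (Finset.sum_pos (fun i _ => hdiag i) Finset.univ_nonempty)

omit [DecidableEq n] in
lemma trace_real {M : Matrix n n ℂ} (h : Mᴴ = M) : star M.trace = M.trace := by
  rw [← Matrix.trace_conjTranspose, h]

/-- `matLog` of a Kronecker product of positive definite matrices splits. -/
lemma matLog_kronecker {n₁ n₂ : ℕ} {A : Matrix (Fin n₁) (Fin n₁) ℂ}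
    {B : Matrix (Fin n₂) (Fin n₂) ℂ} (hA : A.PosDef) (hB : B.PosDef) :
    matLog (A ⊗ₖ B) = matLog A ⊗ₖ (1 : Matrix (Fin n₂) (Fin n₂) ℂ)
      + (1 : Matrix (Fin n₁) (Fin n₁) ℂ) ⊗ₖ matLog B := by
  have hAh : A.IsHermitian := hA.1
  have hBh : B.IsHermitian := hB.1
  have hMh : (A ⊗ₖ B).IsHermitian := by
    rw [Matrix.IsHermitian, kron_conjTranspose, hAh.eq, hBh.eq]
  -- interpolation set
  set T : Finset ℝ := (Finset.univ.image hMh.eigenvalues) ∪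
      (Finset.univ.image fun ij : Fin n₁ × Fin n₂ =>
        hAh.eigenvalues ij.1 * hBh.eigenvalues ij.2) with hT
  set p : ℂ[X] :=
    Lagrange.interpolate T (fun t : ℝ => (t : ℂ)) (fun t : ℝ => ((Real.log t : ℝ) : ℂ)) with hpdef
  have hinj : Set.InjOn (fun t : ℝ => (t : ℂ)) T := fun a _ b _ h =>
    Complex.ofReal_injective h
  have hnode : ∀ t ∈ T, eval ((t : ℝ) : ℂ) p = ((Real.log t : ℝ) : ℂ) := fun t ht =>
    Lagrange.eval_interpolate_at_node _ hinj ht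
  -- matLog (A ⊗ₖ B) = aeval (A ⊗ₖ B) p
  have hM : aeval (A ⊗ₖ B) p = matLog (A ⊗ₖ B) := by
    apply aeval_eq_matLog hMh
    intro i
    exact hnode _ (Finset.mem_union_left _ (Finset.mem_image_of_mem _ (Finset.mem_univ i)))
  -- compute aeval (A ⊗ₖ B) p explicitly
  set U : Matrix (Fin n₁) (Fin n₁) ℂ := (hAh.eigenvectorUnitary : Matrix (Fin n₁) (Fin n₁) ℂ)
  set V : Matrix (Fin n₂) (Fin n₂) ℂ := (hBh.eigenvectorUnitary : Matrix (Fin n₂) (Fin n₂) ℂ)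
  have hU1 : U * star U = 1 := (Matrix.mem_unitaryGroup_iff).mp hAh.eigenvectorUnitary.2
  have hU2 : star U * U = 1 := (Matrix.mem_unitaryGroup_iff').mp hAh.eigenvectorUnitary.2
  have hV1 : V * star V = 1 := (Matrix.mem_unitaryGroup_iff).mp hBh.eigenvectorUnitary.2
  have hV2 : star V * V = 1 := (Matrix.mem_unitaryGroup_iff').mp hBh.eigenvectorUnitary.2
  set W : Matrix (Fin n₁ × Fin n₂) (Fin n₁ × Fin n₂) ℂ := U ⊗ₖ V with hW
  have hW1 : W * (star U ⊗ₖ star V) = 1 := by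
    rw [hW, ← Matrix.mul_kronecker_mul, hU1, hV1, Matrix.one_kronecker_one]
  have hW2 : (star U ⊗ₖ star V) * W = 1 := by
    rw [hW, ← Matrix.mul_kronecker_mul, hU2, hV2, Matrix.one_kronecker_one]
  have hdecomp : A ⊗ₖ B = W * (Matrix.diagonal
      (fun ij : Fin n₁ × Fin n₂ =>
        ((hAh.eigenvalues ij.1 * hBh.eigenvalues ij.2 : ℝ) : ℂ))) * (star U ⊗ₖ star V) := by
    conv_lhs => rw [hAh.spectral_theorem, hBh.spectral_theorem, Unitary.conjStarAlgAut_apply, Unitary.conjStarAlgAut_apply]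
    rw [Matrix.mul_kronecker_mul, Matrix.mul_kronecker_mul,
      Matrix.diagonal_kronecker_diagonal]
    congr 1
    congr 1
    funext ij
    push_cast
    rfl
  have heval : ∀ ij : Fin n₁ × Fin n₂,
      eval ((hAh.eigenvalues ij.1 * hBh.eigenvalues ij.2 : ℝ) : ℂ) p
        = ((Real.log (hAh.eigenvalues ij.1) : ℝ) : ℂ)
          + ((Real.log (hBh.eigenvalues ij.2) : ℝ) : ℂ) := by
    intro ij
    rw [hnode _ (Finset.mem_union_right _
      (Finset.mem_image_of_mem _ (Finset.mem_univ ij)))]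
    rw [Real.log_mul (ne_of_gt (hA.eigenvalues_pos ij.1)) (ne_of_gt (hB.eigenvalues_pos ij.2))]
    push_cast
    ring
  rw [← hM, hdecomp, aeval_conj _ _ _ hW1 hW2, aeval_diagonal]
  have hdiag : (Matrix.diagonal fun ij : Fin n₁ × Fin n₂ =>
      eval ((hAh.eigenvalues ij.1 * hBh.eigenvalues ij.2 : ℝ) : ℂ) p)
      = (Matrix.diagonal fun i => ((Real.log (hAh.eigenvalues i) : ℝ) : ℂ)) ⊗ₖ
          (1 : Matrix (Fin n₂) (Fin n₂) ℂ)
        + (1 : Matrix (Fin n₁) (Fin n₁) ℂ) ⊗ₖ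
          (Matrix.diagonal fun j => ((Real.log (hBh.eigenvalues j) : ℝ) : ℂ)) := by
    rw [← Matrix.diagonal_one (n := Fin n₂), ← Matrix.diagonal_one (n := Fin n₁),
      Matrix.diagonal_kronecker_diagonal, Matrix.diagonal_kronecker_diagonal,
      Matrix.diagonal_add]
    exact congrArg Matrix.diagonal (funext fun ij => by
      rw [heval ij]; simp [Pi.one_apply])
  rw [hdiag, Matrix.mul_add, Matrix.add_mul, hW, ← Matrix.mul_kronecker_mul,
    ← Matrix.mul_kronecker_mul, ← Matrix.mul_kronecker_mul, ← Matrix.mul_kronecker_mul,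
    Matrix.mul_one, Matrix.mul_one, hU1, hV1]
  rw [matLog, dif_pos hAh, matLog, dif_pos hBh]
  rw [Matrix.star_eq_conjTranspose, Matrix.star_eq_conjTranspose]

/-- For a critical point, the functional `a ↦ Tr(x aᴴ L)` is proportional to
`a ↦ Tr(x aᴴ)` on `K`. -/
lemma critical_linear {K : Submodule ℂ (Matrix n n ℂ)} {x : Matrix n n ℂ}
    (hxK : x ∈ K) (hx : (x * xᴴ).PosDef) (hc : IsCriticalIn K x) [Nonempty n] :
    ∀ a ∈ K, Matrix.trace (x * aᴴ * matLog (x * xᴴ))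
      = (Matrix.trace (x * xᴴ * matLog (x * xᴴ)) / Matrix.trace (x * xᴴ))
          * Matrix.trace (x * aᴴ) := by
  intro a ha
  set L := matLog (x * xᴴ)
  set t : ℂ := Matrix.trace (x * xᴴ) with ht
  have htne : t ≠ 0 := trace_pos_of_posDef hx
  set c : ℂ := Matrix.trace (x * aᴴ) with hc'
  set a' : Matrix n n ℂ := a - (star c / t) • x with ha'
  have ha'K : a' ∈ K := K.sub_mem ha (K.smul_mem _ hxK)
  have htreal : star t = t := by
    rw [ht]
    exact trace_real hx.1.eq
  have horth : Matrix.trace (x * a'ᴴ) = 0 := by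
    rw [ha', Matrix.conjTranspose_sub, Matrix.conjTranspose_smul, Matrix.mul_sub,
      Matrix.mul_smul, Matrix.trace_sub, Matrix.trace_smul]
    rw [star_div₀, star_star, htreal]
    rw [← hc', ← ht]
    simp [smul_eq_mul, htne]
  have hcrit := hc a' ha'K horth
  rw [ha', Matrix.conjTranspose_sub, Matrix.conjTranspose_smul, Matrix.mul_sub,
    Matrix.sub_mul, Matrix.mul_smul, Matrix.smul_mul, Matrix.trace_sub,
    Matrix.trace_smul, star_div₀, star_star, htreal] at hcrit
  have : Matrix.trace (x * aᴴ * L) = (c / t) • Matrix.trace (x * xᴴ * L) := by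
    linear_combination hcrit
  rw [this]
  simp only [smul_eq_mul]
  ring

end Aux

/-- If `x⁽¹⁾` and `x⁽²⁾` are critical points of the entanglement entropy in `K₁` and `K₂`
(with `x⁽ⁱ⁾x⁽ⁱ⁾*` positive definite), then `x⁽¹⁾ ⊗ x⁽²⁾` is a critical point in `K₁ ⊗ K₂`. -/
theorem critical_tensor_critical {n₁ n₂ : ℕ}
    (K₁ : Submodule ℂ (Matrix (Fin n₁) (Fin n₁) ℂ))
    (K₂ : Submodule ℂ (Matrix (Fin n₂) (Fin n₂) ℂ))
    (x₁ : Matrix (Fin n₁) (Fin n₁) ℂ) (x₂ : Matrix (Fin n₂) (Fin n₂) ℂ)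
    (hx₁K : x₁ ∈ K₁) (hx₂K : x₂ ∈ K₂)
    (hx₁ : (x₁ * x₁ᴴ).PosDef) (hx₂ : (x₂ * x₂ᴴ).PosDef)
    (hc₁ : IsCriticalIn K₁ x₁) (hc₂ : IsCriticalIn K₂ x₂) :
    IsCriticalIn (tensorSubspace K₁ K₂) (x₁ ⊗ₖ x₂) := by
  intro y hy hyorth
  -- degenerate cases
  rcases isEmpty_or_nonempty (Fin n₁) with h₁ | h₁
  · have : IsEmpty (Fin n₁ × Fin n₂) := by infer_instance
    simp [Matrix.trace]
  rcases isEmpty_or_nonempty (Fin n₂) with h₂ | h₂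
  · have : IsEmpty (Fin n₁ × Fin n₂) := by infer_instance
    simp [Matrix.trace]
  set X := x₁ ⊗ₖ x₂ with hX
  set L₁ := matLog (x₁ * x₁ᴴ)
  set L₂ := matLog (x₂ * x₂ᴴ)
  set μ₁ : ℂ := Matrix.trace (x₁ * x₁ᴴ * L₁) / Matrix.trace (x₁ * x₁ᴴ) with hμ₁
  set μ₂ : ℂ := Matrix.trace (x₂ * x₂ᴴ * L₂) / Matrix.trace (x₂ * x₂ᴴ) with hμ₂
  have hXX : X * Xᴴ = (x₁ * x₁ᴴ) ⊗ₖ (x₂ * x₂ᴴ) := by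
    rw [hX, kron_conjTranspose, ← Matrix.mul_kronecker_mul]
  have hL : matLog (X * Xᴴ) = L₁ ⊗ₖ (1 : Matrix (Fin n₂) (Fin n₂) ℂ)
      + (1 : Matrix (Fin n₁) (Fin n₁) ℂ) ⊗ₖ L₂ := by
    rw [hXX]
    exact matLog_kronecker hx₁ hx₂
  -- the key linear identity on the span
  have key : ∀ z ∈ tensorSubspace K₁ K₂,
      Matrix.trace (X * zᴴ * matLog (X * Xᴴ))
        = (μ₁ + μ₂) * Matrix.trace (X * zᴴ) := by
    intro z hz
    induction hz using Submodule.span_induction with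
    | mem z hzmem =>
      obtain ⟨a, haK, b, hbK, rfl⟩ := hzmem
      have e1 : X * (a ⊗ₖ b)ᴴ = (x₁ * aᴴ) ⊗ₖ (x₂ * bᴴ) := by
        rw [hX, kron_conjTranspose, ← Matrix.mul_kronecker_mul]
      rw [hL, e1, Matrix.mul_add, ← Matrix.mul_kronecker_mul, ← Matrix.mul_kronecker_mul,
        Matrix.trace_add, Matrix.trace_kronecker, Matrix.trace_kronecker,
        Matrix.trace_kronecker, Matrix.mul_one, Matrix.mul_one]
      rw [critical_linear hx₁K hx₁ hc₁ a haK, critical_linear hx₂K hx₂ hc₂ b hbK]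
      rw [← hμ₁, ← hμ₂]
      ring
    | zero => simp
    | add u v hu hv ihu ihv =>
      rw [Matrix.conjTranspose_add, Matrix.mul_add, Matrix.add_mul, Matrix.trace_add,
        Matrix.trace_add, ihu, ihv]
      ring
    | smul r u hu ihu =>
      rw [Matrix.conjTranspose_smul, Matrix.mul_smul, Matrix.smul_mul, Matrix.trace_smul,
        Matrix.trace_smul, ihu]
      simp only [smul_eq_mul]
      ring
  rw [key y hy, hyorth, mul_zero]
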